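/- Factorial-moment (correlation function) identity on a finite set: let n : ℕ, let p be a determinantal probability measure on the subsets of Fin n with kernel K : Matrix (Fin n) (Fin n) ℂ, let m : ℕ and let E : Fin m → Finset (Fin n) be pairwise disjoint. Then the expectation ∑ over S : Finset (Fin n) of p S * ∏ j, ((S ∩ E j).card : ℂ) equals the sum over all tuples x : Fin m → Fin n with x j ∈ E j for each j of the determinant of the m × m matrix with (i,j) entry K (x i) (x j). -/
import Mathlib


open scoped ComplexConjugate

/-- Determinant of the principal submatrix of `K` on the finset `S`. -/
noncomputable def detMinor {n : ℕ} (K : Matrix (Fin n) (Fin n) ℂ) (S : Finset (Fin n)) : ℂ :=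
  (Matrix.of fun a b : Fin S.card =>
    K (S.orderEmbOfFin rfl a) (S.orderEmbOfFin rfl b)).det

/-- `p` is a determinantal probability measure on subsets of `Fin n` with kernel `K`. -/
def IsDeterminantal {n : ℕ} (K : Matrix (Fin n) (Fin n) ℂ)
    (p : PMF (Finset (Fin n))) : Prop :=
  ∀ S : Finset (Fin n),
    ∑ T ∈ Finset.univ.filter (fun T => S ⊆ T), ((p T).toReal : ℂ) = detMinor K S

lemma detMinor_image {n m : ℕ} (K : Matrix (Fin n) (Fin n) ℂ) (x : Fin m → Fin n)
    (hx : Function.Injective x) :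
    detMinor K (Finset.image x Finset.univ) =
      (Matrix.of fun i j : Fin m => K (x i) (x j)).det := by
  set T := Finset.image x Finset.univ with hT
  have hcard : T.card = m := by
    rw [hT, Finset.card_image_of_injective _ hx, Finset.card_univ, Fintype.card_fin]
  have hmem : ∀ a : Fin T.card, ∃ j, x j = T.orderEmbOfFin rfl a := by
    intro a
    have hmem := T.orderEmbOfFin_mem rfl a
    obtain ⟨j, _, hj⟩ := Finset.mem_image.mp hmem
    exact ⟨j, hj⟩
  choose e hxe using hmem
  have hinj : Function.Injective e := by
    intro a b hab
    apply (T.orderEmbOfFin rfl).injective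
    rw [← hxe, ← hxe, hab]
  have hbij : Function.Bijective e := by
    rw [Fintype.bijective_iff_injective_and_card]
    refine ⟨hinj, ?_⟩
    simp [hcard]
  set E' : Fin T.card ≃ Fin m := Equiv.ofBijective e hbij with hE'
  have : detMinor K T =
      ((Matrix.of fun i j : Fin m => K (x i) (x j)).submatrix E' E').det := by
    unfold detMinor
    congr 1
    ext a b
    simp [Matrix.submatrix, hE', Equiv.ofBijective, ← hxe]
  rw [this, Matrix.det_submatrix_equiv_self]

theorem determinantal_factorial_moments {n : ℕ} (K : Matrix (Fin n) (Fin n) ℂ)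
    (p : PMF (Finset (Fin n))) (hp : IsDeterminantal K p)
    (m : ℕ) (E : Fin m → Finset (Fin n))
    (hE : Pairwise fun i j => Disjoint (E i) (E j)) :
    ∑ S : Finset (Fin n), ((p S).toReal : ℂ) * ∏ j, ((S ∩ E j).card : ℂ) =
      ∑ x ∈ Finset.univ.filter (fun x : Fin m → Fin n => ∀ j, x j ∈ E j),
        (Matrix.of fun i j : Fin m => K (x i) (x j)).det := by
  have hfilter : Finset.univ.filter (fun x : Fin m → Fin n => ∀ j, x j ∈ E j)
      = Fintype.piFinset E := by
    ext x; simp [Fintype.mem_piFinset]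
  -- step 1: rewrite the product as a sum of indicators
  have hprod : ∀ S : Finset (Fin n),
      ∏ j, ((S ∩ E j).card : ℂ) =
        ∑ x ∈ Fintype.piFinset E, (if ∀ j, x j ∈ S then (1 : ℂ) else 0) := by
    intro S
    have h1 : Fintype.piFinset (fun j => S ∩ E j)
        = (Fintype.piFinset E).filter (fun x => ∀ j, x j ∈ S) := by
      ext x
      simp [Fintype.mem_piFinset, Finset.mem_inter, forall_and, and_comm]
    calc ∏ j, ((S ∩ E j).card : ℂ)
        = ((Fintype.piFinset (fun j => S ∩ E j)).card : ℂ) := by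
          rw [Fintype.card_piFinset]; push_cast; ring
      _ = ∑ x ∈ Fintype.piFinset E, (if ∀ j, x j ∈ S then (1 : ℂ) else 0) := by
          rw [h1, Finset.card_filter]; push_cast; simp
  calc ∑ S : Finset (Fin n), ((p S).toReal : ℂ) * ∏ j, ((S ∩ E j).card : ℂ)
      = ∑ S : Finset (Fin n), ∑ x ∈ Fintype.piFinset E,
          ((p S).toReal : ℂ) * (if ∀ j, x j ∈ S then (1 : ℂ) else 0) := by
        refine Finset.sum_congr rfl fun S _ => ?_
        rw [hprod S, Finset.mul_sum]
    _ = ∑ x ∈ Fintype.piFinset E, ∑ S : Finset (Fin n),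
          ((p S).toReal : ℂ) * (if ∀ j, x j ∈ S then (1 : ℂ) else 0) := Finset.sum_comm
    _ = ∑ x ∈ Fintype.piFinset E,
          ∑ S ∈ Finset.univ.filter (fun S => Finset.image x Finset.univ ⊆ S),
            ((p S).toReal : ℂ) := by
        refine Finset.sum_congr rfl fun x _ => ?_
        rw [Finset.sum_filter]
        refine Finset.sum_congr rfl fun S _ => ?_
        rw [mul_ite, mul_one, mul_zero]
        congr 1
        simp [Finset.image_subset_iff]
    _ = ∑ x ∈ Fintype.piFinset E, detMinor K (Finset.image x Finset.univ) := by
        refine Finset.sum_congr rfl fun x _ => hp _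
    _ = ∑ x ∈ Finset.univ.filter (fun x : Fin m → Fin n => ∀ j, x j ∈ E j),
          (Matrix.of fun i j : Fin m => K (x i) (x j)).det := by
        rw [hfilter]
        refine Finset.sum_congr rfl fun x hx => ?_
        rw [Fintype.mem_piFinset] at hx
        have hxinj : Function.Injective x := by
          intro i j hij
          by_contra hne
          exact Finset.disjoint_left.mp (hE hne) (hx i) (hij ▸ hx j)
        exact detMinor_image K x hxinj
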